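/- Let f be a complex polynomial of degree d with coefficients α_0,…,α_d. If R > 0 and an index 0 ≤ k ≤ d satisfy |α_k| R^k > ∑_{j≠k} |α_j| R^j, then f has exactly k roots (counted with multiplicity) of absolute value less than R. -/

import Mathlib

open Polynomial Filter


-- continuity of coefficients of ∏ (X - C (v i)) in v
lemma aux_contCoeff {ι : Type*} [DecidableEq ι] (s : Finset ι) :
    ∀ j : ℕ, Continuous fun v : ι → ℂ => (∏ i ∈ s, (X - C (v i))).coeff j := by
  classical
  induction s using Finset.induction with
  | empty => intro j; simp only [Finset.prod_empty]; exact continuous_const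
  | insert a s ha ih =>
    intro j
    have key : ∀ v : ι → ℂ, (∏ i ∈ insert a s, (X - C (v i))).coeff j
        = (if j = 0 then 0 else (∏ i ∈ s, (X - C (v i))).coeff (j - 1))
          - (∏ i ∈ s, (X - C (v i))).coeff j * v a := by
      intro v
      rw [Finset.prod_insert ha, mul_comm]
      cases j with
      | zero => simp [mul_coeff_zero, mul_comm]
      | succ n => simp [coeff_mul_X_sub_C]
    simp only [key]
    apply Continuous.sub
    · split
      · exact continuous_const
      · exact ih _
    · exact (ih j).mul (continuous_apply a)

-- root bound
lemma aux_rootBound {d : ℕ} (hd1 : 1 ≤ d) {L : ℂ} (hL : L ≠ 0) {p : Polynomial ℂ}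
    (hdeg : p.natDegree = d) (hlead : p.leadingCoeff = L) {M : ℝ}
    (hM : ∀ j < d, ‖(p.coeff j)‖ ≤ M) {z : ℂ} (hz : p.IsRoot z) :
    ‖z‖ ≤ max 1 (d * M / ‖L‖) := by
  by_cases h1 : ‖z‖ ≤ 1
  · exact le_trans h1 (le_max_left _ _)
  push_neg at h1
  refine le_trans ?_ (le_max_right _ _)
  have hev : p.eval z = 0 := hz
  rw [eval_eq_sum_range, hdeg] at hev
  rw [Finset.sum_range_succ] at hev
  have hc : p.coeff d = L := by rw [← hlead, leadingCoeff, hdeg]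
  have heq : L * z ^ d = -∑ j ∈ Finset.range d, p.coeff j * z ^ j := by
    rw [hc] at hev; linear_combination hev
  have habs : ‖L‖ * ‖z‖ ^ d
      ≤ ∑ j ∈ Finset.range d, M * ‖z‖ ^ (d - 1) := by
    calc ‖L‖ * ‖z‖ ^ d = ‖(L * z ^ d)‖ := by
          rw [norm_mul, norm_pow]
      _ = ‖(∑ j ∈ Finset.range d, p.coeff j * z ^ j)‖ := by rw [heq, norm_neg]
      _ ≤ ∑ j ∈ Finset.range d, ‖(p.coeff j * z ^ j)‖ := by
          exact norm_sum_le _ _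
      _ ≤ ∑ j ∈ Finset.range d, M * ‖z‖ ^ (d - 1) := by
          refine Finset.sum_le_sum fun j hj => ?_
          rw [norm_mul, norm_pow]
          refine mul_le_mul (hM j (Finset.mem_range.mp hj)) ?_ (by positivity) ?_
          · exact pow_le_pow_right₀ (le_of_lt h1) (Nat.le_sub_one_of_lt (Finset.mem_range.mp hj))
          · exact le_trans (norm_nonneg _) (hM 0 hd1)
  rw [Finset.sum_const, Finset.card_range, nsmul_eq_mul] at habs
  have hL0 : 0 < ‖L‖ := norm_pos_iff.mpr hL
  have hzpow : (0:ℝ) < ‖z‖ ^ (d - 1) := by positivity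
  have hdd : ‖z‖ ^ d = ‖z‖ ^ (d - 1) * ‖z‖ := by
    rw [← pow_succ]; congr 1; omega
  rw [hdd] at habs
  rw [le_div_iff₀ hL0]
  nlinarith [habs, hzpow]

lemma aux_ofFn {d : ℕ} (s : Multiset ℂ) (h : Multiset.card s = d) :
    ∃ z : Fin d → ℂ, s = ↑(List.ofFn z) := by
  have hl : s.toList.length = d := by rw [Multiset.length_toList, h]
  subst hl
  exact ⟨s.toList.get, by rw [List.ofFn_get, Multiset.coe_toList]⟩

lemma aux_count (R : ℝ) {d : ℕ} (z : Fin d → ℂ) :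
    ((↑(List.ofFn fun i => Polynomial.X - Polynomial.C (z i)) : Multiset (Polynomial ℂ)).prod.roots.filter
      fun x => ‖x‖ < R).card
    = (Finset.univ.filter fun i => ‖(z i)‖ < R).card := by
  classical
  have h1 : (List.ofFn fun i => Polynomial.X - Polynomial.C (z i))
      = List.map (fun a => Polynomial.X - Polynomial.C a) (List.ofFn z) := by
    rw [List.map_ofFn]; rfl
  rw [h1]
  rw [show ((List.map (fun a => Polynomial.X - Polynomial.C a) (List.ofFn z) : List (Polynomial ℂ)) : Multiset (Polynomial ℂ)) = Multiset.map (fun a => Polynomial.X - Polynomial.C a) ↑(List.ofFn z) from rfl]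
  rw [Polynomial.roots_multiset_prod_X_sub_C]
  rw [List.ofFn_eq_map]
  rw [show ((List.map z (List.finRange d) : List ℂ) : Multiset ℂ) = Multiset.map z ↑(List.finRange d) from rfl]
  rw [Multiset.filter_map, Multiset.card_map]
  rfl

lemma aux_count2 (R : ℝ) {d : ℕ} (z : Fin d → ℂ) :
    (((List.ofFn z : List ℂ) : Multiset ℂ).filter fun x => ‖x‖ < R).card
    = (Finset.univ.filter fun i => ‖(z i)‖ < R).card := by
  classical
  rw [List.ofFn_eq_map]
  rw [show ((List.map z (List.finRange d) : List ℂ) : Multiset ℂ) = Multiset.map z ↑(List.finRange d) from rfl]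
  rw [Multiset.filter_map, Multiset.card_map]
  rfl

lemma aux_prodcoe {d : ℕ} (v : Fin d → ℂ) :
    ((↑(List.ofFn fun i => Polynomial.X - Polynomial.C (v i)) : Multiset (Polynomial ℂ))).prod
      = ∏ i, (Polynomial.X - Polynomial.C (v i)) := by
  rw [Multiset.prod_coe, List.prod_ofFn]

lemma aux_subseq {d : ℕ} (hd1 : 1 ≤ d) {L : ℂ} (hL : L ≠ 0) {R : ℝ}
    (p : ℕ → Polynomial ℂ) (q : Polynomial ℂ)
    (hpdeg : ∀ n, (p n).natDegree = d) (hplead : ∀ n, (p n).leadingCoeff = L)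
    (hconv : ∀ j, Filter.Tendsto (fun n => (p n).coeff j) Filter.atTop (nhds (q.coeff j)))
    (hcirc : ∀ z : ℂ, ‖z‖ = R → ¬ q.IsRoot z) :
    ∃ φ : ℕ → ℕ, StrictMono φ ∧ ∀ᶠ n in Filter.atTop,
      ((p (φ n)).roots.filter fun z => ‖z‖ < R).card
        = (q.roots.filter fun z => ‖z‖ < R).card := by
  classical
  have hp0 : ∀ n, p n ≠ 0 := fun n =>
    leadingCoeff_ne_zero.mp (by rw [hplead n]; exact hL)
  have hcard : ∀ n, Multiset.card (p n).roots = d := fun n => by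
    rw [← hpdeg n]
    exact splits_iff_card_roots.mp (IsAlgClosed.splits _)
  choose z hz using fun n => aux_ofFn (p n).roots (hcard n)
  have hfac : ∀ n, p n
      = C L * ((↑(List.ofFn fun i => X - C (z n i)) : Multiset (Polynomial ℂ))).prod := by
    intro n
    have h0 := (C_leadingCoeff_mul_prod_multiset_X_sub_C (splits_iff_card_roots.mp (IsAlgClosed.splits (p n)))).symm
    rw [hplead n, hz n] at h0
    convert h0 using 3
    rw [show ((List.ofFn (z n) : List ℂ) : Multiset ℂ).map (fun a => X - C a)
        = ((List.ofFn (z n)).map (fun a => X - C a) : List (Polynomial ℂ)) from rfl,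
      List.map_ofFn]
    rfl
  -- uniform bound on coefficients
  have hMj : ∀ j, ∃ Mj : ℝ, ∀ n, ‖((p n).coeff j)‖ ≤ Mj := by
    intro j
    have h1 : Filter.Tendsto (fun n => ‖(p n).coeff j‖) Filter.atTop (nhds ‖q.coeff j‖) :=
      (hconv j).norm
    obtain ⟨Mj, hMj⟩ := h1.bddAbove_range
    exact ⟨Mj, fun n => by simpa using hMj ⟨n, rfl⟩⟩
  choose Mf hMf using hMj
  set M : ℝ := ∑ j ∈ Finset.range d, max (Mf j) 0 with hM
  have hMle : ∀ n, ∀ j < d, ‖((p n).coeff j)‖ ≤ M := by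
    intro n j hj
    refine le_trans (hMf j n) (le_trans (le_max_left _ 0) ?_)
    exact Finset.single_le_sum (f := fun j => max (Mf j) 0)
      (fun _ _ => le_max_right _ 0) (Finset.mem_range.mpr hj)
  set B : ℝ := max 1 (d * M / ‖L‖) with hB
  have hB0 : (0:ℝ) ≤ B := le_trans zero_le_one (le_max_left _ _)
  have hmemroots : ∀ n i, (z n i) ∈ (p n).roots := by
    intro n i
    rw [hz n, Multiset.mem_coe]
    rw [List.mem_ofFn]
    exact ⟨i, rfl⟩
  have hzB : ∀ n, z n ∈ Metric.closedBall (0 : Fin d → ℂ) B := by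
    intro n
    rw [Metric.mem_closedBall, dist_zero_right, pi_norm_le_iff_of_nonneg hB0]
    intro i
    have hroot : (p n).IsRoot (z n i) := (mem_roots (hp0 n)).mp (hmemroots n i)
    rw [hB]
    exact aux_rootBound hd1 hL (hpdeg n) (hplead n) (fun j hj => hMle n j hj) hroot
  obtain ⟨w, -, φ, hφ, hwt⟩ :=
    (isCompact_closedBall (0 : Fin d → ℂ) B).tendsto_subseq hzB
  have hcoord : ∀ i, Filter.Tendsto (fun n => z (φ n) i) Filter.atTop (nhds (w i)) :=
    fun i => (tendsto_pi_nhds.mp hwt) i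
  -- identify q
  have hq : q = C L * ((↑(List.ofFn fun i => X - C (w i)) : Multiset (Polynomial ℂ))).prod := by
    apply Polynomial.ext
    intro j
    have h1 : Filter.Tendsto (fun n => (p (φ n)).coeff j) Filter.atTop (nhds (q.coeff j)) :=
      (hconv j).comp (hφ.tendsto_atTop)
    have h2 : Filter.Tendsto (fun n => (p (φ n)).coeff j) Filter.atTop
        (nhds (L * (∏ i, (X - C (w i))).coeff j)) := by
      have h3 : ∀ n, (p (φ n)).coeff j = L * (∏ i, (X - C (z (φ n) i))).coeff j := by
        intro n
        rw [hfac (φ n), aux_prodcoe, coeff_C_mul]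
      simp only [h3]
      exact ((aux_contCoeff Finset.univ j).tendsto w).comp hwt |>.const_mul L
    rw [tendsto_nhds_unique h1 h2, aux_prodcoe, coeff_C_mul]
  have hqroots : q.roots = ↑(List.ofFn w) := by
    rw [hq, roots_C_mul _ hL,
      show ((List.ofFn fun i => X - C (w i) : List (Polynomial ℂ)) : Multiset (Polynomial ℂ))
        = ((List.ofFn w : List ℂ) : Multiset ℂ).map (fun a => X - C a) by
          rw [show (((List.ofFn w : List ℂ) : Multiset ℂ)).map (fun a => X - C a)
            = ((List.ofFn w).map (fun a => X - C a) : List (Polynomial ℂ)) from rfl, List.map_ofFn]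
          rfl,
      roots_multiset_prod_X_sub_C]
  have hwcirc : ∀ i, ‖(w i)‖ ≠ R := by
    intro i
    intro hiR
    refine hcirc (w i) hiR ?_
    have : w i ∈ q.roots := by
      rw [hqroots, Multiset.mem_coe, List.mem_ofFn]; exact ⟨i, rfl⟩
    have hq0 : q ≠ 0 := by
      intro h0; rw [h0, roots_zero] at this; exact absurd this (Multiset.notMem_zero _)
    exact (mem_roots hq0).mp this
  refine ⟨φ, hφ, ?_⟩
  have hiff : ∀ᶠ n in Filter.atTop, ∀ i,
      (‖(z (φ n) i)‖ < R ↔ ‖(w i)‖ < R) := by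
    rw [eventually_all]
    intro i
    have habs : Filter.Tendsto (fun n => ‖(z (φ n) i)‖) Filter.atTop
        (nhds (‖(w i)‖)) :=
      (continuous_norm.tendsto _).comp (hcoord i)
    rcases lt_or_gt_of_ne (hwcirc i) with hlt | hgt
    · exact (habs.eventually_lt_const hlt).mono fun n h => by simp [h, hlt]
    · exact (habs.eventually_const_lt hgt).mono fun n h => by
        simp [not_lt.mpr (le_of_lt h), not_lt.mpr (le_of_lt hgt)]
  refine hiff.mono fun n hn => ?_
  rw [hz (φ n), hqroots, aux_count2, aux_count2]
  congr 1
  exact Finset.filter_congr fun i _ => by rw [hn i]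

lemma aux_eventually {d : ℕ} (hd1 : 1 ≤ d) {L : ℂ} (hL : L ≠ 0) {R : ℝ}
    (p : ℕ → Polynomial ℂ) (q : Polynomial ℂ)
    (hpdeg : ∀ n, (p n).natDegree = d) (hplead : ∀ n, (p n).leadingCoeff = L)
    (hconv : ∀ j, Filter.Tendsto (fun n => (p n).coeff j) Filter.atTop (nhds (q.coeff j)))
    (hcirc : ∀ z : ℂ, ‖z‖ = R → ¬ q.IsRoot z) :
    ∀ᶠ n in Filter.atTop,
      ((p n).roots.filter fun z => ‖z‖ < R).card
        = (q.roots.filter fun z => ‖z‖ < R).card := by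
  by_contra h
  rw [Filter.not_eventually] at h
  obtain ⟨ψ, hψ, hne⟩ := Filter.extraction_of_frequently_atTop h
  obtain ⟨φ, -, hev⟩ := aux_subseq hd1 hL (fun n => p (ψ n)) q
    (fun n => hpdeg (ψ n)) (fun n => hplead (ψ n))
    (fun j => (hconv j).comp hψ.tendsto_atTop) hcirc
  obtain ⟨n, hn⟩ := hev.exists
  exact hne (φ n) hn




theorem stmt_5 (f : Polynomial ℂ) (hf : f ≠ 0) (d k : ℕ) (hd : f.natDegree = d)
    (hk : k ≤ d) (R : ℝ) (hR : 0 < R)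
    (hdom : ∑ j ∈ (Finset.range (d + 1)).erase k, ‖(f.coeff j)‖ * R ^ j
        < ‖(f.coeff k)‖ * R ^ k) :
    (f.roots.filter fun z => ‖z‖ < R).card = k := by
  classical
  rcases Nat.eq_zero_or_pos d with hd0 | hd1
  · subst hd0
    interval_cases k
    rw [Polynomial.eq_C_of_natDegree_eq_zero hd, roots_C]
    rfl
  have hαd : f.coeff d ≠ 0 := by
    rw [← hd, ← leadingCoeff]; exact leadingCoeff_ne_zero.mpr hf
  set τ : ℝ → ℝ := fun t => max 0 (min t 1) with hτdef
  have hτc : Continuous τ := by fun_prop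
  have hτ0 : ∀ t, 0 ≤ τ t := fun t => le_max_left _ _
  have hτ1 : ∀ t, τ t ≤ 1 := fun t => max_le zero_le_one (min_le_right _ _)
  set c : ℝ → ℕ → ℂ := fun t j => if j = k ∨ j = d then f.coeff j else (τ t : ℂ) * f.coeff j
    with hcdef
  set F : ℝ → Polynomial ℂ := fun t => ∑ j ∈ Finset.range (d + 1), monomial j (c t j) with hFdef
  have hFcoeff : ∀ t m, (F t).coeff m = if m < d + 1 then c t m else 0 := by
    intro t m
    rw [hFdef]
    simp only [finset_sum_coeff, coeff_monomial]
    rw [Finset.sum_ite_eq' (Finset.range (d + 1)) m]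
    simp [Finset.mem_range]
  have hck : ∀ t, c t k = f.coeff k := fun t => if_pos (Or.inl rfl)
  have hcd : ∀ t, c t d = f.coeff d := fun t => if_pos (Or.inr rfl)
  have hcabs : ∀ t j, ‖(c t j)‖ ≤ ‖(f.coeff j)‖ := by
    intro t j
    rw [hcdef]; dsimp only
    split
    · exact le_rfl
    · rw [norm_mul, Complex.norm_real, Real.norm_eq_abs, abs_of_nonneg (hτ0 t)]
      nlinarith [hτ1 t, hτ0 t, norm_nonneg (f.coeff j)]
  have hFd : ∀ t, (F t).natDegree = d := by
    intro t
    apply le_antisymm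
    · apply natDegree_le_iff_coeff_eq_zero.mpr
      intro m hm
      rw [hFcoeff, if_neg (by omega)]
    · exact le_natDegree_of_ne_zero (by rw [hFcoeff, if_pos (by omega), hcd]; exact hαd)
  have hFlead : ∀ t, (F t).leadingCoeff = f.coeff d := by
    intro t
    rw [leadingCoeff, hFd, hFcoeff, if_pos (by omega), hcd]
  have hcirc : ∀ t z, ‖z‖ = R → ¬ (F t).IsRoot z := by
    intro t z hzR hroot
    have hev : (F t).eval z = 0 := hroot
    rw [eval_eq_sum_range' (n := d + 1) (by rw [hFd t]; omega) z] at hev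
    rw [Finset.sum_congr rfl (fun j hj => by
      rw [hFcoeff, if_pos (Finset.mem_range.mp hj)])] at hev
    have hkmem : k ∈ Finset.range (d + 1) := Finset.mem_range.mpr (by omega)
    rw [← Finset.insert_erase hkmem, Finset.sum_insert (Finset.notMem_erase _ _)] at hev
    have heq : c t k * z ^ k = -∑ j ∈ (Finset.range (d + 1)).erase k, c t j * z ^ j := by
      linear_combination hev
    have hle : ‖(f.coeff k)‖ * R ^ k
        ≤ ∑ j ∈ (Finset.range (d + 1)).erase k, ‖(f.coeff j)‖ * R ^ j := by
      calc ‖(f.coeff k)‖ * R ^ k = ‖(c t k * z ^ k)‖ := by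
            rw [hck, norm_mul, norm_pow, hzR]
        _ = ‖(∑ j ∈ (Finset.range (d + 1)).erase k, c t j * z ^ j)‖ := by
            rw [heq, norm_neg]
        _ ≤ ∑ j ∈ (Finset.range (d + 1)).erase k, ‖(c t j * z ^ j)‖ :=
            norm_sum_le _ _
        _ ≤ ∑ j ∈ (Finset.range (d + 1)).erase k, ‖(f.coeff j)‖ * R ^ j := by
            refine Finset.sum_le_sum fun j hj => ?_
            rw [norm_mul, norm_pow, hzR]
            exact mul_le_mul_of_nonneg_right (hcabs t j) (by positivity)
    exact absurd (lt_of_le_of_lt hle hdom) (lt_irrefl _)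
  have hNcont : Continuous (fun t => ((F t).roots.filter fun z => ‖z‖ < R).card) := by
    rw [continuous_iff_seqContinuous]
    intro u t hu
    apply tendsto_nhds_of_eventually_eq
    apply aux_eventually hd1 hαd (fun n => F (u n)) (F t) (fun n => hFd _) (fun n => hFlead _)
      ?_ (fun z hz => hcirc t z hz)
    intro j
    have hcc : Continuous fun s => c s j := by
      by_cases hj : j = k ∨ j = d
      · simp only [hcdef, if_pos hj]; exact continuous_const
      · simp only [hcdef, if_neg hj]
        exact (Complex.continuous_ofReal.comp hτc).mul continuous_const
    simp only [hFcoeff]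
    split
    · exact (hcc.tendsto t).comp hu
    · exact tendsto_const_nhds
  have h10 := ((IsLocallyConstant.iff_continuous _).mpr hNcont).apply_eq_of_preconnectedSpace
    (1 : ℝ) (0 : ℝ)
  have hτ1' : τ (1 : ℝ) = 1 := by rw [hτdef]; norm_num
  have hτ0' : τ (0 : ℝ) = 0 := by rw [hτdef]; norm_num
  have hF1 : F 1 = f := by
    apply Polynomial.ext
    intro m
    rw [hFcoeff]
    split
    · rw [hcdef]; dsimp only; rw [hτ1']
      split <;> simp
    · exact (coeff_eq_zero_of_natDegree_lt (by omega)).symm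
  have hc0 : ∀ j, c 0 j = if j = k ∨ j = d then f.coeff j else 0 := by
    intro j
    rw [hcdef]; dsimp only; rw [hτ0']
    split <;> simp
  have hrepl : ∀ n : ℕ, ((n • ({0} : Multiset ℂ)).filter fun z => ‖z‖ < R).card = n := by
    intro n
    rw [Multiset.filter_eq_self.mpr, Multiset.card_nsmul, Multiset.card_singleton, mul_one]
    intro a ha
    have ha0 : a = 0 := by
      rcases n with _ | n
      · simp at ha
      · rw [Multiset.mem_nsmul] at ha; simpa using ha.2
    simpa [ha0] using hR
  have hN0 : ((F 0).roots.filter fun z => ‖z‖ < R).card = k := by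
    by_cases hkd : k = d
    · have hF0 : F 0 = C (f.coeff d) * X ^ d := by
        apply Polynomial.ext
        intro m
        rw [hFcoeff, coeff_C_mul, coeff_X_pow]
        by_cases hm : m = d
        · subst hm; rw [if_pos (by omega), hc0, if_pos (Or.inr rfl)]; simp
        · rw [show (if m = d then (1:ℂ) else 0) = 0 from if_neg hm, mul_zero]
          split
          · rw [hc0, if_neg (by omega)]
          · rfl
      rw [hF0, roots_C_mul _ hαd, roots_pow, roots_X, hrepl, hkd]
    · have hkd' : k < d := lt_of_le_of_ne hk hkd
      set g : Polynomial ℂ := C (f.coeff d) * X ^ (d - k) + C (f.coeff k) with hgdef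
      have hgcoeff : ∀ i, g.coeff i
          = (if i = d - k then f.coeff d else 0) + (if i = 0 then f.coeff k else 0) := by
        intro i
        rw [hgdef, coeff_add, coeff_C_mul, coeff_X_pow, coeff_C]
        split <;> simp
      have hF0 : F 0 = g * X ^ k := by
        apply Polynomial.ext
        intro m
        rw [hFcoeff, coeff_mul_X_pow']
        by_cases hmk : k ≤ m
        · rw [if_pos hmk, hgcoeff]
          by_cases hmd : m = d
          · subst hmd
            rw [if_pos (by omega), hc0, if_pos (Or.inr rfl), if_pos (by omega),
              if_neg (by omega)]
            ring
          · by_cases hmk2 : m = k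
            · subst hmk2
              rw [if_pos (by omega), hc0, if_pos (Or.inl rfl), if_neg (by omega),
                if_pos (by omega)]
              ring
            · rw [if_neg (show ¬(m - k = d - k) by omega), if_neg (show ¬(m - k = 0) by omega)]
              split
              · rw [hc0, if_neg (by omega)]; ring
              · ring
        · rw [if_neg hmk, if_pos (by omega), hc0, if_neg (by omega)]
      have hgne : g.coeff (d - k) ≠ 0 := by
        rw [hgcoeff, if_pos rfl, if_neg (by omega)]
        simpa using hαd
      have hg0 : g ≠ 0 := fun h => hgne (by rw [h]; simp)
      have hXk : (X : Polynomial ℂ) ^ k ≠ 0 := pow_ne_zero _ X_ne_zero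
      rw [hF0, roots_mul (mul_ne_zero hg0 hXk), roots_pow, roots_X,
        Multiset.filter_add, Multiset.card_add, hrepl]
      have h1 : Multiset.filter (fun z => ‖z‖ < R) g.roots = 0 := by
        rw [Multiset.filter_eq_nil]
        intro a ha hlt
        have hroot : g.eval a = 0 := (mem_roots hg0).mp ha
        rw [hgdef] at hroot
        simp only [eval_add, eval_mul, eval_pow, eval_C, eval_X] at hroot
        have h3 : ‖(f.coeff k)‖
            = ‖(f.coeff d)‖ * ‖a‖ ^ (d - k) := by
          have h3' : f.coeff k = -(f.coeff d * a ^ (d - k)) := by linear_combination hroot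
          rw [h3', norm_neg, norm_mul, norm_pow]
        have hdmem : d ∈ (Finset.range (d + 1)).erase k :=
          Finset.mem_erase.mpr ⟨fun h => hkd h.symm, Finset.mem_range.mpr (by omega)⟩
        have h4 : ‖(f.coeff d)‖ * R ^ d
            ≤ ∑ j ∈ (Finset.range (d + 1)).erase k, ‖(f.coeff j)‖ * R ^ j :=
          Finset.single_le_sum (f := fun j => ‖(f.coeff j)‖ * R ^ j)
            (fun j _ => by positivity) hdmem
        have h5 : ‖(f.coeff d)‖ * R ^ d < ‖(f.coeff k)‖ * R ^ k :=
          lt_of_le_of_lt h4 hdom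
        have hRd : R ^ d = R ^ (d - k) * R ^ k := by rw [← pow_add]; congr 1; omega
        have hRk : (0 : ℝ) < R ^ k := by positivity
        have h6 : ‖(f.coeff d)‖ * R ^ (d - k) < ‖(f.coeff k)‖ := by
          rw [hRd, ← mul_assoc] at h5
          exact (mul_lt_mul_iff_of_pos_right hRk).mp h5
        have h8 : ‖a‖ ^ (d - k) ≤ R ^ (d - k) :=
          pow_le_pow_left₀ (norm_nonneg _) hlt.le _
        nlinarith [h3, h6, h8, norm_nonneg (f.coeff d)]
      rw [h1]
      simp
  rw [show f = F 1 from hF1.symm, h10, hN0]
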